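/- Let n ≥ 3 and ℓ ≥ 1 be integers. Call λ = (λ₁, …, λₙ) ∈ ℝⁿ a D_n-dominant weight if λ₁ ≥ λ₂ ≥ ⋯ ≥ λ_{n−1} ≥ |λₙ| and either all λᵢ ∈ ℤ or all λᵢ ∈ ½ + ℤ. Suppose λ is a D_n-dominant weight with λ₁ + λ₂ ≤ ℓ. Then there exists ν ∈ ℝⁿ which is either 0, or ±eᵢ for some standard basis vector eᵢ, or of the form ½(ε₁, …, εₙ) with every εᵢ ∈ {+1, −1}, such that μ = λ − ν is a D_n-dominant weight with μ₁ + μ₂ ≤ ℓ − 1. -/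

import Mathlib

/-- `lam` is a dominant weight for `D_n`: `λ₁ ≥ λ₂ ≥ ⋯ ≥ λ_{n−1} ≥ |λₙ|` and the entries
are either all integers or all half-integers. -/
def DnDominant {n : ℕ} (lam : Fin n → ℝ) : Prop :=
  (∀ i j : Fin n, i ≤ j → (j : ℕ) + 1 < n → lam j ≤ lam i) ∧
  (∀ i : Fin n, (i : ℕ) + 1 < n → ∀ j : Fin n, (j : ℕ) + 1 = n → |lam j| ≤ lam i) ∧
  ((∀ i, ∃ m : ℤ, lam i = (m : ℝ)) ∨ (∀ i, ∃ m : ℤ, lam i = (m : ℝ) + 1 / 2))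

private lemma Dn_int_gap {a b : ℝ} (h : ∃ m : ℤ, a - b = m) (hlt : b < a) : b + 1 ≤ a := by
  obtain ⟨m, hm⟩ := h
  have h0 : (0 : ℝ) < (m : ℝ) := by linarith
  have h1 : (1 : ℤ) ≤ m := by exact_mod_cast h0
  have : (1 : ℝ) ≤ (m : ℝ) := by exact_mod_cast h1
  linarith

private lemma Dn_half_pos {a : ℝ} (h : ∃ m : ℤ, a = m / 2) (ha : 0 < a) : 1 / 2 ≤ a := by
  obtain ⟨m, rfl⟩ := h
  have h0 : (0 : ℝ) < (m : ℝ) := by linarith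
  have h1 : (1 : ℤ) ≤ m := by exact_mod_cast h0
  have : (1 : ℝ) ≤ (m : ℝ) := by exact_mod_cast h1
  linarith

private lemma Dn_half_neg {a : ℝ} (h : ∃ m : ℤ, a = m / 2) (ha : a < 0) : a ≤ -(1 / 2) := by
  obtain ⟨m, rfl⟩ := h
  have h0 : (m : ℝ) < 0 := by linarith
  have h1 : m ≤ (-1 : ℤ) := by
    have : m < 0 := by exact_mod_cast h0
    omega
  have : (m : ℝ) ≤ (-1 : ℝ) := by exact_mod_cast h1
  linarith

/-- Every `D_n`-dominant weight admissible at level `ℓ` can be decremented by a weight of a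
minimal representation (trivial, vector, or one of the two spin modules) so as to stay
dominant and become admissible at level `ℓ − 1`. -/
theorem dominant_weight_peel_minimal (n ℓ : ℕ) (hn : 3 ≤ n) (hℓ : 1 ≤ ℓ)
    (lam : Fin n → ℝ) (hdom : DnDominant lam)
    (hlevel : lam ⟨0, by omega⟩ + lam ⟨1, by omega⟩ ≤ (ℓ : ℝ)) :
    ∃ ν : Fin n → ℝ,
      (ν = 0 ∨ (∃ i : Fin n, ν = Pi.single i 1 ∨ ν = -Pi.single i 1) ∨
        (∀ i, ν i = 1 / 2 ∨ ν i = -(1 / 2))) ∧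
      DnDominant (lam - ν) ∧
      (lam - ν) ⟨0, by omega⟩ + (lam - ν) ⟨1, by omega⟩ ≤ (ℓ : ℝ) - 1 := by
  have h0n : 0 < n := by omega
  have h1n : 1 < n := by omega
  set i0 : Fin n := ⟨0, by omega⟩ with hi0
  set i1 : Fin n := ⟨1, by omega⟩ with hi1
  have hdiff : ∀ i j : Fin n, ∃ m : ℤ, lam i - lam j = (m : ℝ) := by
    rcases hdom.2.2 with h | h
    · intro i j
      obtain ⟨a, ha⟩ := h i; obtain ⟨b, hb⟩ := h j
      exact ⟨a - b, by rw [ha, hb]; push_cast; ring⟩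
    · intro i j
      obtain ⟨a, ha⟩ := h i; obtain ⟨b, hb⟩ := h j
      exact ⟨a - b, by rw [ha, hb]; push_cast; ring⟩
  have hhalf : ∀ i : Fin n, ∃ m : ℤ, lam i = (m : ℝ) / 2 := by
    rcases hdom.2.2 with h | h
    · intro i; obtain ⟨a, ha⟩ := h i
      exact ⟨2 * a, by rw [ha]; push_cast; ring⟩
    · intro i; obtain ⟨a, ha⟩ := h i
      exact ⟨2 * a + 1, by rw [ha]; push_cast; ring⟩
  by_cases hA : lam i0 + lam i1 ≤ (ℓ : ℝ) - 1
  · exact ⟨0, Or.inl rfl, by simpa using hdom, by simpa using hA⟩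
  by_cases hB : lam i1 < lam i0
  · -- subtract e₁
    have h01 : lam i1 + 1 ≤ lam i0 := Dn_int_gap (hdiff i0 i1) hB
    refine ⟨Pi.single i0 1, Or.inr (Or.inl ⟨i0, Or.inl rfl⟩), ⟨?_, ?_, ?_⟩, ?_⟩
    · intro i j hij hj
      simp only [Pi.sub_apply, Pi.single_apply]
      by_cases hji : j = i0
      · have hii : i = i0 := le_antisymm (hji ▸ hij) (by simp [Fin.le_def, hi0])
        rw [if_pos hji, if_pos hii, hji, hii]
      · have hj1 : i1 ≤ j := by
          rw [Fin.le_def]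
          rcases Nat.eq_zero_or_pos (j : ℕ) with h0 | h1
          · exact absurd (Fin.ext (h0.trans rfl)) hji
          · simp [hi1]; omega
        have hjle : lam j ≤ lam i1 := hdom.1 i1 j hj1 hj
        by_cases hii : i = i0
        · rw [if_neg hji, if_pos hii, hii]
          linarith
        · rw [if_neg hji, if_neg hii]
          have := hdom.1 i j hij hj
          linarith
    · intro i hi j hj
      have hji : j ≠ i0 := by
        intro hc
        have : (j : ℕ) = 0 := by rw [hc]
        omega
      have habs : |lam j| ≤ lam i1 := hdom.2.1 i1 (by simp only [hi1]; omega) j hj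
      simp only [Pi.sub_apply, Pi.single_apply, if_neg hji, sub_zero]
      by_cases hii : i = i0
      · rw [if_pos hii, hii]
        linarith
      · rw [if_neg hii]
        have := hdom.2.1 i hi j hj
        linarith
    · rcases hdom.2.2 with h | h
      · left
        intro i
        obtain ⟨a, ha⟩ := h i
        by_cases hii : i = i0
        · exact ⟨a - 1, by
            simp only [Pi.sub_apply, Pi.single_apply, if_pos hii]
            rw [ha]; push_cast; ring⟩
        · exact ⟨a, by
            simp only [Pi.sub_apply, Pi.single_apply, if_neg hii, sub_zero]
            exact ha⟩
      · right
        intro i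
        obtain ⟨a, ha⟩ := h i
        by_cases hii : i = i0
        · exact ⟨a - 1, by
            simp only [Pi.sub_apply, Pi.single_apply, if_pos hii]
            rw [ha]; push_cast; ring⟩
        · exact ⟨a, by
            simp only [Pi.sub_apply, Pi.single_apply, if_neg hii, sub_zero]
            exact ha⟩
    · have h10 : i1 ≠ i0 := by
        intro hc
        have : (1 : ℕ) = 0 := by simpa [hi0, hi1, Fin.ext_iff] using hc
        omega
      simp only [Pi.sub_apply, Pi.single_apply]
      rw [if_neg h10]
      simp only [if_true]
      linarith
  · -- spin case : lam i0 = lam i1, level exactly hit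
    push_neg at hA hB
    have heq : lam i0 = lam i1 :=
      le_antisymm hB (hdom.1 i0 i1 (by simp [Fin.le_def, hi0, hi1]) (by simp only [hi1]; omega))
    have hl1 : (1 : ℝ) ≤ (ℓ : ℝ) := by exact_mod_cast hℓ
    have hpos1 : 0 < lam i1 := by linarith
    refine ⟨fun i => if 0 < lam i then (1 : ℝ) / 2 else -(1 / 2),
      Or.inr (Or.inr fun i => by by_cases h : 0 < lam i <;> simp [h]), ⟨?_, ?_, ?_⟩, ?_⟩
    · intro i j hij hj
      have hle : lam j ≤ lam i := hdom.1 i j hij hj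
      simp only [Pi.sub_apply]
      by_cases hi : 0 < lam i
      · by_cases hjp : 0 < lam j
        · rw [if_pos hi, if_pos hjp]; linarith
        · have hgap : lam j + 1 ≤ lam i := Dn_int_gap (hdiff i j) (by push_neg at hjp; linarith)
          rw [if_pos hi, if_neg hjp]; linarith
      · have hjp : ¬ 0 < lam j := by push_neg at hi ⊢; linarith
        rw [if_neg hi, if_neg hjp]; linarith
    · intro i hi j hj
      have habs : |lam j| ≤ lam i := hdom.2.1 i hi j hj
      obtain ⟨hL, hR⟩ := abs_le.mp habs
      simp only [Pi.sub_apply]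
      rcases lt_trichotomy (lam j) 0 with h | h | h
      · have hjh : lam j ≤ -(1 / 2) := Dn_half_neg (hhalf j) h
        have hip : 0 < lam i := by linarith
        rw [if_neg (not_lt.mpr h.le), if_pos hip,
          abs_of_nonpos (by linarith : lam j - -(1/2 : ℝ) ≤ 0)]
        linarith
      · rw [if_neg (not_lt.mpr h.le), h]
        by_cases hip : 0 < lam i
        · have hgap : lam j + 1 ≤ lam i := Dn_int_gap (hdiff i j) (by linarith)
          rw [if_pos hip, abs_of_nonneg (by norm_num : (0 : ℝ) ≤ 0 - -(1/2 : ℝ))]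
          linarith
        · have hie : lam i = 0 := le_antisymm (not_lt.mp hip) (by linarith)
          rw [if_neg hip, hie, abs_of_nonneg (by norm_num : (0 : ℝ) ≤ 0 - -(1/2 : ℝ))]
      · have hjh : 1 / 2 ≤ lam j := Dn_half_pos (hhalf j) h
        have hip : 0 < lam i := by linarith
        rw [if_pos h, if_pos hip, abs_of_nonneg (by linarith : (0:ℝ) ≤ lam j - 1/2)]
        linarith
    · rcases hdom.2.2 with h | h
      · right
        intro i
        obtain ⟨a, ha⟩ := h i
        by_cases hip : 0 < lam i
        · exact ⟨a - 1, by
            simp only [Pi.sub_apply, if_pos hip]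
            rw [ha]; push_cast; ring⟩
        · exact ⟨a, by
            simp only [Pi.sub_apply, if_neg hip]
            rw [ha]; push_cast; ring⟩
      · left
        intro i
        obtain ⟨a, ha⟩ := h i
        by_cases hip : 0 < lam i
        · exact ⟨a, by
            simp only [Pi.sub_apply, if_pos hip]
            rw [ha]; push_cast; ring⟩
        · exact ⟨a + 1, by
            simp only [Pi.sub_apply, if_neg hip]
            rw [ha]; push_cast; ring⟩
    · have hp0 : 0 < lam i0 := by linarith
      simp only [Pi.sub_apply]
      rw [if_pos hp0, if_pos hpos1]
      linarith
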